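/- arXiv:1703.04264 — 6 statements merged into one kernel-verified Lean document; each statement's English description precedes it below -/
import Mathlib

section
/- Likelihood decomposition (measurement-indexed form): for the standard point-target likelihood l(Z | X) = ∑_{Z^c ⊎ Z₁ ⊎...⊎ Zₙ = Z} [c]^{Z^c} ∏_{i=1}^n ĺ(Z_i | x_i) with X = {x₁,...,xₙ} (elements distinct), one has the equivalent representation l({z₁,...,z_m} | X) = ∑_{U ⊎ Y₁ ⊎...⊎ Y_m = X} [1-p_d]^U ∏_{i=1}^m l̃(z_i | Y_i), where ĺ({z}|x) = p_d(x) p(z|x), ĺ(∅|x) = 1-p_d(x), ĺ(Z|x) = 0 for |Z| > 1; and l̃(z|{y}) = p_d(y) p(z|y), l̃(z|∅) = c(z), l̃(z|Y) = 0 for |Y| > 1. (The clutter normalization constant e^{-λ_c} is common to both sides and omitted.) -/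
open Finset

/-- Single-target likelihood `ĺ(S | x)`: `1 - p_d(x)` for `S = ∅`,
`p_d(x) p(z|x)` for `S = {z}`, and `0` for `|S| > 1`. -/
noncomputable def lhat {α β : Type*} [DecidableEq β] (pd : α → ℝ)
    (pz : β → α → ℝ) (S : Finset β) (x : α) : ℝ :=
  if S = ∅ then 1 - pd x else if S.card = 1 then pd x * ∑ z ∈ S, pz z x else 0

/-- Measurement-origin likelihood `l̃(z | Y)`: `c(z)` for `Y = ∅`,
`p_d(y) p(z|y)` for `Y = {y}`, and `0` for `|Y| > 1`. -/
noncomputable def ltilde {α β : Type*} [DecidableEq α] (pd : α → ℝ)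
    (pz : β → α → ℝ) (c : β → ℝ) (z : β) (Y : Finset α) : ℝ :=
  if Y = ∅ then c z else if Y.card = 1 then ∑ y ∈ Y, pd y * pz z y else 0

/-- Target-indexed standard point-target likelihood (up to the common constant
`e^{-λ_c}`): the sum over ordered decompositions `Z = Z^c ⊎ (Z_x)_{x∈X}`
(encoded by `ψ : Z → Option X`) of `[c]^{Z^c} ∏_{x∈X} ĺ(Z_x | x)`. -/
noncomputable def stdLik {α β : Type*} [DecidableEq α] [DecidableEq β]
    (pd : α → ℝ) (pz : β → α → ℝ) (c : β → ℝ)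
    (Z : Finset β) (X : Finset α) : ℝ :=
  ∑ ψ : {z // z ∈ Z} → Option {x // x ∈ X},
    (∏ z ∈ (Finset.univ.filter (fun z => ψ z = none)).image Subtype.val, c z) *
      ∏ x : {x // x ∈ X},
        lhat pd pz ((Finset.univ.filter (fun z => ψ z = some x)).image Subtype.val) x.1

/-- Measurement-indexed likelihood representation (up to `e^{-λ_c}`): the sum
over ordered decompositions `X = U ⊎ (Y_z)_{z∈Z}` (encoded by
`φ : X → Option Z`) of `[1-p_d]^U ∏_{z∈Z} l̃(z | Y_z)`. -/
noncomputable def lsLik {α β : Type*} [DecidableEq α] [DecidableEq β]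
    (pd : α → ℝ) (pz : β → α → ℝ) (c : β → ℝ)
    (Z : Finset β) (X : Finset α) : ℝ :=
  ∑ φ : {x // x ∈ X} → Option {z // z ∈ Z},
    (∏ u ∈ (Finset.univ.filter (fun a => φ a = none)).image Subtype.val, (1 - pd u)) *
      ∏ z : {z // z ∈ Z},
        ltilde pd pz c z.1 ((Finset.univ.filter (fun a => φ a = some z)).image Subtype.val)


namespace StdLikAux

/-- abstract single-cell likelihood -/
noncomputable def ell {ι : Type*} [DecidableEq ι] (b : ℝ) (w : ι → ℝ) (S : Finset ι) : ℝ :=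
  if S = ∅ then b else if S.card = 1 then ∑ i ∈ S, w i else 0

variable {γ δ : Type*} [Fintype γ] [Fintype δ] [DecidableEq γ] [DecidableEq δ]

def good (ψ : γ → Option δ) : Prop :=
  ∀ z z' y, ψ z = some y → ψ z' = some y → z = z'

noncomputable def pinv (ψ : γ → Option δ) : δ → Option γ :=
  fun y => if h : ∃ z, ψ z = some y then some h.choose else none

lemma pinv_forward {ψ : γ → Option δ} {y : δ} {z : γ} (h : pinv ψ y = some z) :
    ψ z = some y := by
  unfold pinv at h
  split_ifs at h with hex
  injection h with h
  exact h ▸ hex.choose_spec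

lemma pinv_some_iff {ψ : γ → Option δ} (hψ : good ψ) {y : δ} {z : γ} :
    pinv ψ y = some z ↔ ψ z = some y := by
  constructor
  · exact pinv_forward
  · intro h
    have hex : ∃ z', ψ z' = some y := ⟨z, h⟩
    unfold pinv
    rw [dif_pos hex]
    exact congrArg some (hψ _ _ _ hex.choose_spec h)

lemma good_pinv (ψ : γ → Option δ) : good (pinv ψ) := by
  intro x x' z h h'
  have := pinv_forward h
  have := pinv_forward h'
  simp_all

lemma pinv_pinv {ψ : γ → Option δ} (hψ : good ψ) : pinv (pinv ψ) = ψ := by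
  funext z
  cases hz : ψ z with
  | none =>
    cases h : pinv (pinv ψ) z with
    | none => rfl
    | some y =>
      have := pinv_forward (pinv_forward h)
      rw [hz] at this; exact absurd this (by simp)
  | some y =>
    exact (pinv_some_iff (good_pinv ψ)).mpr ((pinv_some_iff hψ).mpr hz)

lemma prod_ell {ψ : γ → Option δ} (hψ : good ψ) (b : δ → ℝ) (w : γ → δ → ℝ) :
    (∏ x : δ, ell (b x) (fun z => w z x) (univ.filter (fun z => ψ z = some x)))
    = (∏ x ∈ univ.filter (fun x => pinv ψ x = none), b x) *
      ∏ p ∈ univ.filter (fun p : γ × δ => ψ p.1 = some p.2), w p.1 p.2 := by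
  classical
  rw [← Finset.prod_filter_mul_prod_filter_not univ (fun x => pinv ψ x = none)]
  congr 1
  · apply Finset.prod_congr rfl
    intro x hx
    simp only [mem_filter] at hx
    have hfib : (univ.filter (fun z => ψ z = some x)) = ∅ := by
      apply Finset.filter_eq_empty_iff.mpr
      intro z _ hz
      have : pinv ψ x = some ((⟨z, hz⟩ : ∃ z', ψ z' = some x).choose) := by
        unfold pinv; rw [dif_pos ⟨z, hz⟩]
      rw [hx.2] at this; exact absurd this (by simp)
    rw [hfib]; simp [ell]
  · symm
    apply Finset.prod_bij (fun (p : γ × δ) _ => p.2)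
    · intro p hp
      simp only [mem_filter, mem_univ, true_and] at hp ⊢
      rw [(pinv_some_iff hψ).mpr hp]; simp
    · intro p hp q hq h
      simp only [mem_filter, mem_univ, true_and] at hp hq
      have : p.1 = q.1 := hψ _ _ _ hp (h ▸ hq)
      exact Prod.ext this h
    · intro x hx
      simp only [mem_filter, mem_univ, true_and] at hx
      obtain ⟨z, hz⟩ := Option.ne_none_iff_exists'.mp hx
      exact ⟨(z, x), by simp [pinv_forward hz], rfl⟩
    · intro p hp
      simp only [mem_filter, mem_univ, true_and] at hp
      have hfib : (univ.filter (fun z => ψ z = some p.2)) = {p.1} := by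
        ext z
        simp only [mem_filter, mem_univ, true_and, mem_singleton]
        constructor
        · intro h; exact hψ _ _ _ h hp
        · intro h; exact h ▸ hp
      rw [hfib]; simp [ell]

lemma prod_ell_zero {ψ : γ → Option δ} (hψ : ¬ good ψ) (b : δ → ℝ) (w : γ → δ → ℝ) :
    (∏ x : δ, ell (b x) (fun z => w z x) (univ.filter (fun z => ψ z = some x))) = 0 := by
  classical
  simp only [good, not_forall] at hψ
  obtain ⟨z, z', y, hz, hz', hne⟩ := hψ
  apply Finset.prod_eq_zero (Finset.mem_univ y)
  have hsub : ({z, z'} : Finset γ) ⊆ univ.filter (fun w => ψ w = some y) := by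
    intro a ha
    simp only [mem_insert, mem_singleton] at ha
    rcases ha with rfl | rfl <;> simp [hz, hz']
  have hcard : 2 ≤ (univ.filter (fun w => ψ w = some y)).card := by
    calc 2 = ({z, z'} : Finset γ).card := by rw [Finset.card_insert_of_notMem (by simpa using hne), Finset.card_singleton]
    _ ≤ _ := Finset.card_le_card hsub
  have hne' : (univ.filter (fun w => ψ w = some y)) ≠ ∅ := by
    intro h; rw [h] at hcard; simp at hcard
  have hc1 : (univ.filter (fun w => ψ w = some y)).card ≠ 1 := by omega
  simp [ell, hne', hc1]

/-- the key abstract symmetric identity -/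
lemma key (cc : γ → ℝ) (q : δ → ℝ) (w : γ → δ → ℝ) :
    (∑ ψ : γ → Option δ,
      (∏ z ∈ univ.filter (fun z => ψ z = none), cc z) *
        ∏ x : δ, ell (q x) (fun z => w z x) (univ.filter (fun z => ψ z = some x)))
    = ∑ φ : δ → Option γ,
      (∏ x ∈ univ.filter (fun x => φ x = none), q x) *
        ∏ z : γ, ell (cc z) (fun x => w z x) (univ.filter (fun x => φ x = some z)) := by
  classical
  rw [← Finset.sum_filter_add_sum_filter_not univ (fun ψ => good ψ),
      ← Finset.sum_filter_add_sum_filter_not univ (fun φ => good φ)]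
  have hz1 : ∑ ψ ∈ univ.filter (fun ψ : γ → Option δ => ¬ good ψ),
      (∏ z ∈ univ.filter (fun z => ψ z = none), cc z) *
        ∏ x : δ, ell (q x) (fun z => w z x) (univ.filter (fun z => ψ z = some x)) = 0 := by
    apply Finset.sum_eq_zero
    intro ψ hψ
    simp only [mem_filter] at hψ
    rw [prod_ell_zero hψ.2, mul_zero]
  have hz2 : ∑ φ ∈ univ.filter (fun φ : δ → Option γ => ¬ good φ),
      (∏ x ∈ univ.filter (fun x => φ x = none), q x) *
        ∏ z : γ, ell (cc z) (fun x => w z x) (univ.filter (fun x => φ x = some z)) = 0 := by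
    apply Finset.sum_eq_zero
    intro φ hφ
    simp only [mem_filter] at hφ
    rw [prod_ell_zero hφ.2, mul_zero]
  rw [hz1, hz2, add_zero, add_zero]
  apply Finset.sum_nbij' (i := pinv) (j := pinv)
  · intro ψ hψ
    simp only [mem_filter, mem_univ, true_and] at hψ ⊢
    exact good_pinv ψ
  · intro φ hφ
    simp only [mem_filter, mem_univ, true_and] at hφ ⊢
    exact good_pinv φ
  · intro ψ hψ
    simp only [mem_filter, mem_univ, true_and] at hψ
    exact pinv_pinv hψ
  · intro φ hφ
    simp only [mem_filter, mem_univ, true_and] at hφ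
    exact pinv_pinv hφ
  · intro ψ hψ
    simp only [mem_filter, mem_univ, true_and] at hψ
    rw [prod_ell hψ q w, prod_ell (good_pinv ψ) cc (fun x z => w z x), pinv_pinv hψ]
    have hswap : (∏ p ∈ univ.filter (fun p : δ × γ => pinv ψ p.1 = some p.2), w p.2 p.1)
        = ∏ p ∈ univ.filter (fun p : γ × δ => ψ p.1 = some p.2), w p.1 p.2 := by
      apply Finset.prod_nbij' (i := Prod.swap) (j := Prod.swap)
      · intro p hp
        simp only [mem_filter, mem_univ, true_and] at hp ⊢
        exact pinv_forward hp
      · intro p hp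
        simp only [mem_filter, mem_univ, true_and] at hp ⊢
        exact (pinv_some_iff hψ).mpr hp
      · intro p _; rfl
      · intro p _; rfl
      · intro p _; rfl
    rw [hswap]; ring

end StdLikAux

section Bridge
open StdLikAux

lemma lhat_eq_ell {α β : Type*} [DecidableEq β] (pd : α → ℝ) (pz : β → α → ℝ)
    {ι : Type*} [DecidableEq ι] (f : ι → β) (hf : Function.Injective f)
    (T : Finset ι) (x : α) :
    lhat pd pz (T.image f) x = ell (1 - pd x) (fun z => pd x * pz (f z) x) T := by
  unfold lhat ell
  rw [Finset.sum_image (fun a _ b _ h => hf h)]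
  simp only [Finset.image_eq_empty, Finset.card_image_of_injective _ hf, Finset.mul_sum]

lemma ltilde_eq_ell {α β : Type*} [DecidableEq α] (pd : α → ℝ) (pz : β → α → ℝ)
    (c : β → ℝ) (z : β) {ι : Type*} [DecidableEq ι] (f : ι → α) (hf : Function.Injective f)
    (T : Finset ι) :
    ltilde pd pz c z (T.image f) = ell (c z) (fun y => pd (f y) * pz z (f y)) T := by
  unfold ltilde ell
  rw [Finset.sum_image (fun a _ b _ h => hf h)]
  simp only [Finset.image_eq_empty, Finset.card_image_of_injective _ hf]

end Bridge


/-- Likelihood decomposition: the target-indexed and the measurement-indexed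
representations of the standard point-target likelihood agree. -/
theorem stdLik_eq_lsLik {α β : Type*} [DecidableEq α] [DecidableEq β]
    (pd : α → ℝ) (pz : β → α → ℝ) (c : β → ℝ)
    (Z : Finset β) (X : Finset α) :
    stdLik pd pz c Z X = lsLik pd pz c Z X := by
  classical
  unfold stdLik lsLik
  have key' := StdLikAux.key (γ := {z // z ∈ Z}) (δ := {x // x ∈ X})
    (fun z => c z.1) (fun x => 1 - pd x.1) (fun z x => pd x.1 * pz z.1 x.1)
  convert key' using 2 with ψ _ <;> clear key'
  · congr 1
    · rw [Finset.prod_image (fun a _ b _ h => Subtype.val_injective h)]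
    · apply Finset.prod_congr rfl
      intro x _
      exact lhat_eq_ell pd pz Subtype.val Subtype.val_injective _ _
  · congr 1
    · rw [Finset.prod_image (fun a _ b _ h => Subtype.val_injective h)]
    · apply Finset.prod_congr rfl
      intro z _
      exact ltilde_eq_ell pd pz c z.1 Subtype.val Subtype.val_injective _
end

section
/- Base case and induction step for the likelihood equivalence: with l and l_s denoting respectively the target-indexed and measurement-indexed likelihood representations (as in the previous statement), one has l_s(Z ∪ {z_{m+1}} | X) = l̃(z_{m+1}|∅) · l_s(Z|X) + ∑_{j=1}^n l̃(z_{m+1} | {x_j}) · l_s(Z | X \ {x_j}) for z_{m+1} ∉ Z. -/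
open Finset

section Aux
variable {α β : Type*} [DecidableEq α] [DecidableEq β]

/-- auxiliary equivalence -/
def insEquiv (Z : Finset β) (z' : β) (hz : z' ∉ Z) :
    Option {z // z ∈ Z} ≃ {z // z ∈ insert z' Z} where
  toFun o := o.elim ⟨z', mem_insert_self _ _⟩ (fun t => ⟨t.1, mem_insert_of_mem t.2⟩)
  invFun t' := if h : t'.1 = z' then none else
    some ⟨t'.1, (mem_insert.mp t'.2).resolve_left h⟩
  left_inv := by
    rintro (_ | t)
    · simp
    · have : t.1 ≠ z' := fun h => hz (h ▸ t.2)
      simp [this]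
  right_inv := by
    rintro ⟨t, ht⟩
    by_cases h : t = z'
    · subst h; simp
    · simp [h]

lemma mem_image_filter_val {X : Finset α} (P : {x // x ∈ X} → Prop) [DecidablePred P] (a : α) :
    a ∈ (Finset.univ.filter P).image Subtype.val ↔ ∃ h : a ∈ X, P ⟨a, h⟩ := by
  simp [Finset.mem_image, Subtype.exists]

noncomputable def Fsum (pd : α → ℝ) (pz : β → α → ℝ) (c : β → ℝ)
    (Z : Finset β) (X : Finset α) (z' : β)
    (ψ : {x // x ∈ X} → Option (Option {z // z ∈ Z})) : ℝ :=
  (∏ u ∈ (Finset.univ.filter (fun a => ψ a = none)).image Subtype.val, (1 - pd u)) *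
   (ltilde pd pz c z' ((Finset.univ.filter (fun a => ψ a = some none)).image Subtype.val) *
    ∏ t : {z // z ∈ Z},
      ltilde pd pz c t.1 ((Finset.univ.filter (fun a => ψ a = some (some t))).image Subtype.val))

lemma step1 (pd : α → ℝ) (pz : β → α → ℝ) (c : β → ℝ)
    (Z : Finset β) (X : Finset α) (z' : β) (hz : z' ∉ Z) :
    lsLik pd pz c (insert z' Z) X = ∑ ψ : {x // x ∈ X} → Option (Option {z // z ∈ Z}),
      Fsum pd pz c Z X z' ψ := by
  rw [lsLik]
  refine (Fintype.sum_equiv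
    (Equiv.piCongrRight fun _ => (Equiv.optionCongr (insEquiv Z z' hz)))
    _ _ fun ψ => ?_).symm
  set m := insEquiv Z z' hz with hm
  have hφ : ∀ x, (Equiv.piCongrRight fun _ => Equiv.optionCongr m) ψ x = (ψ x).map m := fun x => rfl
  rw [Fsum]
  congr 1
  · congr 1
    ext x
    simp [hφ, Option.map_eq_none_iff]
  · rw [← Fintype.prod_equiv m
      (fun o => ltilde pd pz c (m o).1
        ((Finset.univ.filter (fun a => ((ψ a).map m) = some (m o))).image Subtype.val))
      _ (fun o => by simp [hφ])]
    rw [Fintype.prod_option]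
    congr 1
    · show ltilde pd pz c z' _ = _
      congr 2
      ext x
      simp [Option.map_eq_some_iff, m.injective.eq_iff]
    · refine Finset.prod_congr rfl fun t _ => ?_
      show ltilde pd pz c t.1 _ = _
      congr 2
      ext x
      simp [Option.map_eq_some_iff, m.injective.eq_iff]

lemma step2 (pd : α → ℝ) (pz : β → α → ℝ) (c : β → ℝ)
    (Z : Finset β) (X : Finset α) (z' : β) :
    ∑ ψ ∈ Finset.univ.filter
        (fun ψ : {x // x ∈ X} → Option (Option {z // z ∈ Z}) =>
          Finset.univ.filter (fun x => ψ x = some none) = ∅),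
      Fsum pd pz c Z X z' ψ = ltilde pd pz c z' ∅ * lsLik pd pz c Z X := by
  rw [lsLik, Finset.mul_sum]
  refine Finset.sum_nbij' (fun ψ => fun x => (ψ x).join)
    (fun g => fun x => (g x).map some) (fun ψ _ => Finset.mem_univ _) ?_ ?_ ?_ ?_
  · intro g _
    simp only [Finset.mem_filter, Finset.mem_univ, true_and]
    rw [Finset.filter_eq_empty_iff]
    intro x _
    cases g x <;> simp
  · intro ψ hψ
    simp only [Finset.mem_filter, Finset.mem_univ, true_and] at hψ
    have key := fun x => Finset.filter_eq_empty_iff.mp hψ (Finset.mem_univ x)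
    funext x
    cases h : ψ x with
    | none => simp [h]
    | some o =>
      cases o with
      | none => exact absurd h (key x)
      | some t => simp [h]
  · intro g _
    funext x
    cases h : g x <;> simp [h]
  · intro ψ hψ
    simp only [Finset.mem_filter, Finset.mem_univ, true_and] at hψ
    have key : ∀ x : {x // x ∈ X}, ψ x ≠ some none :=
      fun x => Finset.filter_eq_empty_iff.mp hψ (Finset.mem_univ x)
    rw [Fsum]
    have hfe : Finset.univ.filter (fun a => ψ a = some none) = (∅ : Finset {x // x ∈ X}) := by
      rw [Finset.filter_eq_empty_iff]; intro x _; exact key x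
    rw [hfe]
    have h1 : (Finset.univ.filter (fun a : {x // x ∈ X} => ψ a = none)).image Subtype.val
        = (Finset.univ.filter (fun a : {x // x ∈ X} => (ψ a).join = none)).image Subtype.val := by
      congr 1
      ext x
      simp only [Finset.mem_filter, Finset.mem_univ, true_and]
      cases h : ψ x with
      | none => simp
      | some o =>
        cases o with
        | none => exact absurd h (key x)
        | some t => simp
    have h2 : ∀ t : {z // z ∈ Z},
        (Finset.univ.filter (fun a : {x // x ∈ X} => ψ a = some (some t))).image Subtype.val
        = (Finset.univ.filter (fun a : {x // x ∈ X} => (ψ a).join = some t)).image Subtype.val := by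
      intro t
      congr 1
      ext x
      simp only [Finset.mem_filter, Finset.mem_univ, true_and]
      cases h : ψ x with
      | none => simp
      | some o =>
        cases o with
        | none => exact absurd h (key x)
        | some t' => simp
    rw [h1]
    simp only [Finset.image_empty, h2]
    ring

lemma step3 (pd : α → ℝ) (pz : β → α → ℝ) (c : β → ℝ)
    (Z : Finset β) (X : Finset α) (z' : β) (x₀ : {x // x ∈ X}) :
    ∑ ψ ∈ Finset.univ.filter
        (fun ψ : {x // x ∈ X} → Option (Option {z // z ∈ Z}) =>
          Finset.univ.filter (fun x => ψ x = some none) = {x₀}),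
      Fsum pd pz c Z X z' ψ
    = ltilde pd pz c z' {x₀.1} * lsLik pd pz c Z (X.erase x₀.1) := by
  rw [lsLik, Finset.mul_sum]
  refine Finset.sum_nbij'
    (fun ψ => fun y : {x // x ∈ X.erase x₀.1} => (ψ ⟨y.1, Finset.mem_of_mem_erase y.2⟩).join)
    (fun g => fun x : {x // x ∈ X} => if hx : x.1 = x₀.1 then some none
      else (g ⟨x.1, Finset.mem_erase.mpr ⟨hx, x.2⟩⟩).map some)
    (fun ψ _ => Finset.mem_univ _) ?_ ?_ ?_ ?_
  · intro g _
    simp only [Finset.mem_filter, Finset.mem_univ, true_and]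
    ext x
    simp only [Finset.mem_filter, Finset.mem_univ, true_and, Finset.mem_singleton]
    by_cases hx : x.1 = x₀.1
    · simp [dif_pos hx, Subtype.ext_iff, hx]
    · rw [dif_neg hx]
      simp [Option.map_eq_some_iff, Subtype.ext_iff, hx]
  · intro ψ hψ
    simp only [Finset.mem_filter, Finset.mem_univ, true_and] at hψ
    have key : ∀ x : {x // x ∈ X}, ψ x = some none ↔ x = x₀ := by
      intro x
      have := Finset.ext_iff.mp hψ x
      simpa using this
    funext x
    dsimp only
    by_cases hx : x.1 = x₀.1
    · rw [dif_pos hx]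
      exact ((key x).mpr (Subtype.ext hx)).symm
    · rw [dif_neg hx]
      have hne : ψ x ≠ some none := fun h => hx (congrArg Subtype.val ((key x).mp h))
      cases h : ψ x with
      | none => simp [h]
      | some o =>
        cases o with
        | none => exact absurd h hne
        | some t => simp [h]
  · intro g _
    funext y
    have hy : y.1 ≠ x₀.1 := (Finset.mem_erase.mp y.2).1
    dsimp only
    rw [dif_neg hy]
    cases h : g ⟨y.1, Finset.mem_erase.mpr ⟨hy, Finset.mem_of_mem_erase y.2⟩⟩ with
    | none => simp [h]
    | some t => simp [h]
  · intro ψ hψ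
    simp only [Finset.mem_filter, Finset.mem_univ, true_and] at hψ
    have key : ∀ x : {x // x ∈ X}, ψ x = some none ↔ x = x₀ := by
      intro x
      have := Finset.ext_iff.mp hψ x
      simpa using this
    rw [Fsum, hψ, Finset.image_singleton]
    have h1 : (Finset.univ.filter (fun a : {x // x ∈ X} => ψ a = none)).image Subtype.val
        = (Finset.univ.filter (fun y : {x // x ∈ X.erase x₀.1} =>
            (ψ ⟨y.1, Finset.mem_of_mem_erase y.2⟩).join = none)).image Subtype.val := by
      ext a
      rw [mem_image_filter_val, mem_image_filter_val]
      constructor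
      · rintro ⟨ha, hnone⟩
        have hne : a ≠ x₀.1 := by
          intro h
          have : (⟨a, ha⟩ : {x // x ∈ X}) = x₀ := Subtype.ext h
          rw [(key _).mpr this] at hnone
          simp at hnone
        exact ⟨Finset.mem_erase.mpr ⟨hne, ha⟩, by rw [show ψ ⟨a, _⟩ = none from hnone]; rfl⟩
      · rintro ⟨ha, hj⟩
        have ha' : a ∈ X := Finset.mem_of_mem_erase ha
        refine ⟨ha', ?_⟩
        have hne : (⟨a, ha'⟩ : {x // x ∈ X}) ≠ x₀ :=
          fun h => (Finset.mem_erase.mp ha).1 (congrArg Subtype.val h)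
        have hne' : ψ ⟨a, ha'⟩ ≠ some none := fun h => hne ((key _).mp h)
        cases h : ψ ⟨a, ha'⟩ with
        | none => rfl
        | some o =>
          cases o with
          | none => exact absurd h hne'
          | some t => rw [h] at hj; simp at hj
    have h2 : ∀ t : {z // z ∈ Z},
        (Finset.univ.filter (fun a : {x // x ∈ X} => ψ a = some (some t))).image Subtype.val
        = (Finset.univ.filter (fun y : {x // x ∈ X.erase x₀.1} =>
            (ψ ⟨y.1, Finset.mem_of_mem_erase y.2⟩).join = some t)).image Subtype.val := by
      intro t
      ext a
      rw [mem_image_filter_val, mem_image_filter_val]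
      constructor
      · rintro ⟨ha, hsome⟩
        have hne : a ≠ x₀.1 := by
          intro h
          have : (⟨a, ha⟩ : {x // x ∈ X}) = x₀ := Subtype.ext h
          rw [(key _).mpr this] at hsome
          simp at hsome
        exact ⟨Finset.mem_erase.mpr ⟨hne, ha⟩, by rw [show ψ ⟨a, _⟩ = some (some t) from hsome]; rfl⟩
      · rintro ⟨ha, hj⟩
        have ha' : a ∈ X := Finset.mem_of_mem_erase ha
        refine ⟨ha', ?_⟩
        have hne : (⟨a, ha'⟩ : {x // x ∈ X}) ≠ x₀ :=
          fun h => (Finset.mem_erase.mp ha).1 (congrArg Subtype.val h)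
        have hne' : ψ ⟨a, ha'⟩ ≠ some none := fun h => hne ((key _).mp h)
        cases h : ψ ⟨a, ha'⟩ with
        | none => rw [h] at hj; simp at hj
        | some o =>
          cases o with
          | none => exact absurd h hne'
          | some t' =>
            rw [h] at hj
            have ht : t' = t := by simpa [Option.join] using hj
            rw [ht]
    rw [h1]
    simp only [h2]
    ring

lemma step4 (pd : α → ℝ) (pz : β → α → ℝ) (c : β → ℝ)
    (Z : Finset β) (X : Finset α) (z' : β) (A : Finset {x // x ∈ X})
    (hA0 : A ≠ ∅) (hA1 : A.card ≠ 1) :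
    ∑ ψ ∈ Finset.univ.filter
        (fun ψ : {x // x ∈ X} → Option (Option {z // z ∈ Z}) =>
          Finset.univ.filter (fun x => ψ x = some none) = A),
      Fsum pd pz c Z X z' ψ = 0 := by
  refine Finset.sum_eq_zero fun ψ hψ => ?_
  simp only [Finset.mem_filter, Finset.mem_univ, true_and] at hψ
  rw [Fsum, hψ]
  have h0 : A.image Subtype.val ≠ ∅ := by
    rw [Ne, Finset.image_eq_empty]; exact hA0
  have h1 : (A.image Subtype.val).card ≠ 1 := by
    rw [Finset.card_image_of_injective _ Subtype.val_injective]; exact hA1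
  rw [ltilde, if_neg h0, if_neg h1]
  ring

end Aux

/-- Recursion of the measurement-indexed likelihood in the measurement
argument: for `z' ∉ Z`,
`l_s(Z ∪ {z'} | X) = l̃(z'|∅) l_s(Z|X) + ∑_{x∈X} l̃(z'|{x}) l_s(Z|X\{x})`. -/
theorem lsLik_insert_measurement {α β : Type*} [DecidableEq α] [DecidableEq β]
    (pd : α → ℝ) (pz : β → α → ℝ) (c : β → ℝ)
    (Z : Finset β) (X : Finset α) (z' : β) (hz : z' ∉ Z) :
    lsLik pd pz c (insert z' Z) X =
      ltilde pd pz c z' ∅ * lsLik pd pz c Z X +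
        ∑ x ∈ X, ltilde pd pz c z' {x} * lsLik pd pz c Z (X.erase x) := by
  rw [step1 pd pz c Z X z' hz]
  rw [← Finset.sum_fiberwise (Finset.univ)
    (fun ψ : {x // x ∈ X} → Option (Option {z // z ∈ Z}) =>
      Finset.univ.filter (fun x => ψ x = some none))
    (Fsum pd pz c Z X z')]
  rw [← Finset.sum_subset
    (Finset.subset_univ (insert (∅ : Finset {x // x ∈ X})
      (Finset.univ.image fun x₀ : {x // x ∈ X} => ({x₀} : Finset _))))
    (fun A _ hA => by
      simp only [Finset.mem_insert, Finset.mem_image, Finset.mem_univ, true_and,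
        not_or, not_exists] at hA
      refine step4 pd pz c Z X z' A hA.1 fun hc => ?_
      obtain ⟨x₀, hx₀⟩ := Finset.card_eq_one.mp hc
      exact hA.2 x₀ hx₀.symm)]
  rw [Finset.sum_insert (by
    simp only [Finset.mem_image, Finset.mem_univ, true_and, not_exists]
    intro x₀ h
    exact Finset.singleton_ne_empty x₀ h)]
  rw [Finset.sum_image (fun a _ b _ h => Finset.singleton_injective h)]
  rw [step2]
  congr 1
  rw [← Finset.sum_coe_sort X (fun x => ltilde pd pz c z' {x} * lsLik pd pz c Z (X.erase x))]
  exact Finset.sum_congr rfl fun x₀ _ => step3 pd pz c Z X z' x₀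
end

section
/- Recursion in the target argument: with the same definitions, l_s(Z | X ∪ {x_{n+1}}) = (1 - p_d(x_{n+1})) · l_s(Z | X) + ∑_{j=1}^m l̃(z_j | {x_{n+1}}) · l_s(Z \ {z_j} | X) for x_{n+1} ∉ X and Z = {z₁,...,z_m}. -/
open Finset

/-- fiber image helper -/
noncomputable def fimg {α γ : Type*} [DecidableEq α] [DecidableEq γ] {X : Finset α}
    (f : {a // a ∈ X} → γ) (w : γ) : Finset α :=
  (Finset.univ.filter (fun a => f a = w)).image Subtype.val

theorem mem_fimg {α γ : Type*} [DecidableEq α] [DecidableEq γ] {X : Finset α}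
    (f : {a // a ∈ X} → γ) (w : γ) (b : α) :
    b ∈ fimg f w ↔ ∃ h : b ∈ X, f ⟨b, h⟩ = w := by
  simp only [fimg, Finset.mem_image, Finset.mem_filter, Finset.mem_univ, true_and]
  constructor
  · rintro ⟨a, ha, rfl⟩; exact ⟨a.2, ha⟩
  · rintro ⟨h, hf⟩; exact ⟨⟨b, h⟩, hf, rfl⟩

theorem lsLik_eq {α β : Type*} [DecidableEq α] [DecidableEq β]
    (pd : α → ℝ) (pz : β → α → ℝ) (c : β → ℝ) (Z : Finset β) (X : Finset α) :
    lsLik pd pz c Z X = ∑ φ : {x // x ∈ X} → Option {z // z ∈ Z},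
      (∏ u ∈ fimg φ none, (1 - pd u)) *
        ∏ z : {z // z ∈ Z}, ltilde pd pz c z.1 (fimg φ (some z)) := rfl


/-- Recursion of the measurement-indexed likelihood in the target argument:
for `x' ∉ X`,
`l_s(Z | X ∪ {x'}) = (1-p_d(x')) l_s(Z|X) + ∑_{z∈Z} l̃(z|{x'}) l_s(Z\{z}|X)`. -/
theorem lsLik_insert_target {α β : Type*} [DecidableEq α] [DecidableEq β]
    (pd : α → ℝ) (pz : β → α → ℝ) (c : β → ℝ)
    (Z : Finset β) (X : Finset α) (x' : α) (hx : x' ∉ X) :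
    lsLik pd pz c Z (insert x' X) =
      (1 - pd x') * lsLik pd pz c Z X +
        ∑ z ∈ Z, ltilde pd pz c z {x'} * lsLik pd pz c (Z.erase z) X := by
  classical
  have hne : ∀ a : {a // a ∈ X}, (a : α) ≠ x' := fun a h => hx (h ▸ a.2)
  -- equivalence between assignments on `insert x' X` and pairs
  let E : ({a // a ∈ insert x' X} → Option {z // z ∈ Z}) ≃
      (Option {z // z ∈ Z} × ({a // a ∈ X} → Option {z // z ∈ Z})) :=
  { toFun := fun φ => (φ ⟨x', Finset.mem_insert_self _ _⟩,
      fun a => φ ⟨a.1, Finset.mem_insert_of_mem a.2⟩)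
    invFun := fun p i =>
      if h : i.1 = x' then p.1 else p.2 ⟨i.1, (Finset.mem_insert.mp i.2).resolve_left h⟩
    left_inv := fun φ => by
      funext i
      by_cases h : i.1 = x'
      · simp only [dif_pos h]
        congr 1
        exact Subtype.ext h.symm
      · simp only [dif_neg h]
    right_inv := fun p => by
      refine Prod.ext ?_ ?_
      · simp
      · funext a
        simp [hne a] }
  have fib : ∀ (v : Option {z // z ∈ Z}) (f : {a // a ∈ X} → Option {z // z ∈ Z})
      (w : Option {z // z ∈ Z}),
      fimg (E.symm (v, f)) w = (if v = w then {x'} else ∅) ∪ fimg f w := by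
    intro v f w
    ext b
    simp only [mem_fimg, Finset.mem_union]
    constructor
    · rintro ⟨h, hfw⟩
      rcases Finset.mem_insert.mp h with h1 | h2
      · left
        have : E.symm (v, f) ⟨b, h⟩ = v := by simp [E, h1]
        rw [this] at hfw
        subst h1
        simp [hfw]
      · right
        have : E.symm (v, f) ⟨b, h⟩ = f ⟨b, h2⟩ := by
          have hb : b ≠ x' := hne ⟨b, h2⟩
          simp [E, hb]
        rw [this] at hfw
        exact ⟨h2, hfw⟩
    · rintro (hb | ⟨h2, hf⟩)
      · by_cases h : v = w
        · simp only [if_pos h, Finset.mem_singleton] at hb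
          subst hb
          refine ⟨Finset.mem_insert_self _ _, ?_⟩
          have h5 : E.symm (v, f) ⟨_, Finset.mem_insert_self b X⟩ = v := by simp [E]
          rw [h5, h]
        · simp [if_neg h] at hb
      · refine ⟨Finset.mem_insert_of_mem h2, ?_⟩
        have hb : b ≠ x' := hne ⟨b, h2⟩
        have : E.symm (v, f) ⟨b, Finset.mem_insert_of_mem h2⟩ = f ⟨b, h2⟩ := by
          simp [E, hb]
        rw [this]; exact hf
  have key : lsLik pd pz c Z (insert x' X)
      = ∑ v : Option {z // z ∈ Z}, ∑ f : {a // a ∈ X} → Option {z // z ∈ Z},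
          (∏ u ∈ ((if v = (none : Option {z // z ∈ Z}) then {x'} else ∅) ∪ fimg f none),
              (1 - pd u)) *
            ∏ z : {z // z ∈ Z},
              ltilde pd pz c z.1 ((if v = some z then {x'} else ∅) ∪ fimg f (some z)) := by
    rw [lsLik_eq, ← Equiv.sum_comp E.symm, Fintype.sum_prod_type]
    refine Finset.sum_congr rfl fun v _ => Finset.sum_congr rfl fun f _ => ?_
    rw [fib v f none]
    congr 1
    exact Fintype.prod_congr _ _ fun z => by rw [fib v f (some z)]
  rw [key, Fintype.sum_option]
  congr 1
  · -- the `none` part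
    rw [lsLik_eq, Finset.mul_sum]
    refine Finset.sum_congr rfl fun f _ => ?_
    have h0 : x' ∉ fimg f (none : Option {z // z ∈ Z}) := by
      rw [mem_fimg]
      rintro ⟨h, -⟩
      exact hx h
    rw [if_pos rfl, ← Finset.insert_eq, Finset.prod_insert h0]
    have hz : ∀ z : {z // z ∈ Z},
        ((if (none : Option {z // z ∈ Z}) = some z then ({x'} : Finset α) else ∅)
          ∪ fimg f (some z)) = fimg f (some z) := fun z => by simp
    have hP : ∏ z : {z // z ∈ Z}, ltilde pd pz c z.1
        ((if (none : Option {z // z ∈ Z}) = some z then ({x'} : Finset α) else ∅)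
          ∪ fimg f (some z))
        = ∏ z : {z // z ∈ Z}, ltilde pd pz c z.1 (fimg f (some z)) :=
      Finset.prod_congr rfl fun z _ => congrArg (ltilde pd pz c z.1) (hz z)
    rw [hP]
    ring
  · -- the `some` part
    rw [← Finset.sum_attach Z (fun z => ltilde pd pz c z {x'} * lsLik pd pz c (Z.erase z) X)]
    refine Finset.sum_congr (Finset.univ_eq_attach Z) fun z₀ _ => ?_
    -- simplify the summand
    have step1 : ∀ f : {a // a ∈ X} → Option {z // z ∈ Z},
        (∏ u ∈ ((if some z₀ = (none : Option {z // z ∈ Z}) then {x'} else ∅) ∪ fimg f none),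
            (1 - pd u)) *
          ∏ z : {z // z ∈ Z},
            ltilde pd pz c z.1 ((if some z₀ = some z then {x'} else ∅) ∪ fimg f (some z))
        = (∏ u ∈ fimg f none, (1 - pd u)) *
            (ltilde pd pz c z₀.1 (insert x' (fimg f (some z₀))) *
              ∏ z ∈ Finset.univ.erase z₀, ltilde pd pz c z.1 (fimg f (some z))) := by
      intro f
      have h1 : ((if some z₀ = (none : Option {z // z ∈ Z}) then ({x'} : Finset α) else ∅)
          ∪ fimg f none) = fimg f none := by simp
      rw [h1]
      congr 1
      rw [← Finset.mul_prod_erase Finset.univ _ (Finset.mem_univ z₀)]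
      congr 1
      · rw [if_pos rfl, ← Finset.insert_eq]
      · refine Finset.prod_congr rfl fun z hzmem => ?_
        have hnz : some z₀ ≠ some z := by
          intro h
          exact (Finset.mem_erase.mp hzmem).1 (Option.some_injective _ h).symm
        show ltilde pd pz c z.1 ((if some z₀ = some z then ({x'} : Finset α) else ∅)
            ∪ fimg f (some z)) = ltilde pd pz c z.1 (fimg f (some z))
        rw [if_neg hnz, Finset.empty_union]
    simp only [step1]
    -- vanishing unless the z₀-fiber is empty
    have hvanish : ∀ f : {a // a ∈ X} → Option {z // z ∈ Z},
        fimg f (some z₀) ≠ ∅ →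
        ltilde pd pz c z₀.1 (insert x' (fimg f (some z₀))) = 0 := by
      intro f hf
      have hx0 : x' ∉ fimg f (some z₀) := by
        rw [mem_fimg]
        rintro ⟨h, -⟩
        exact hx h
      have hcard : (insert x' (fimg f (some z₀))).card = (fimg f (some z₀)).card + 1 :=
        Finset.card_insert_of_notMem hx0
      have hpos : 0 < (fimg f (some z₀)).card :=
        Finset.card_pos.mpr (Finset.nonempty_of_ne_empty hf)
      rw [ltilde, if_neg (Finset.insert_ne_empty _ _), if_neg (by omega)]
    -- the embedding from assignments avoiding z₀
    set ι : {z // z ∈ Z.erase z₀.1} → {z // z ∈ Z} :=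
      fun z => ⟨z.1, Finset.mem_of_mem_erase z.2⟩ with hι
    have ιinj : Function.Injective ι := by
      intro a b h
      have h2 : (ι a).1 = (ι b).1 := congrArg Subtype.val h
      rw [hι] at h2
      exact Subtype.ext h2
    set ext : ({a // a ∈ X} → Option {z // z ∈ Z.erase z₀.1}) →
        ({a // a ∈ X} → Option {z // z ∈ Z}) :=
      fun f' a => (f' a).map ι with hext
    have extinj : ∀ f' ∈ (Finset.univ : Finset ({a // a ∈ X} → Option {z // z ∈ Z.erase z₀.1})),
        ∀ g' ∈ Finset.univ, ext f' = ext g' → f' = g' := by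
      intro f' _ g' _ h
      funext a
      have := congrFun h a
      exact Option.map_injective ιinj this
    have hTzero : ∀ f ∈ (Finset.univ : Finset ({a // a ∈ X} → Option {z // z ∈ Z})),
        f ∉ Finset.univ.image ext →
        (∏ u ∈ fimg f none, (1 - pd u)) *
          (ltilde pd pz c z₀.1 (insert x' (fimg f (some z₀))) *
            ∏ z ∈ Finset.univ.erase z₀, ltilde pd pz c z.1 (fimg f (some z))) = 0 := by
      intro f _ hf
      have hfib : fimg f (some z₀) ≠ ∅ := by
        intro hemp
        apply hf
        refine Finset.mem_image.mpr ⟨fun a => (f a).bind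
          (fun z => if h : z.1 ∈ Z.erase z₀.1 then some ⟨z.1, h⟩ else none),
          Finset.mem_univ _, ?_⟩
        funext a
        rcases ha : f a with _ | z
        · simp [ext, ha]
        · have hz : z ≠ z₀ := by
            intro h
            have : (a : α) ∈ fimg f (some z₀) :=
              (mem_fimg f (some z₀) a.1).mpr ⟨a.2, by rw [Subtype.coe_eta, ha, h]⟩
            rw [hemp] at this
            exact absurd this (Finset.notMem_empty _)
          have hz1 : z.1 ∈ Z.erase z₀.1 :=
            Finset.mem_erase.mpr ⟨fun h => hz (Subtype.ext h), z.2⟩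
          simp only [ext, ha, Option.bind_some, dif_pos hz1, Option.map_some]
          rfl
      rw [hvanish f hfib]
      ring
    rw [← Finset.sum_subset (Finset.subset_univ (Finset.univ.image ext)) hTzero,
      Finset.sum_image extinj]
    -- now compute each term
    rw [lsLik_eq, Finset.mul_sum]
    refine Finset.sum_congr rfl fun f' _ => ?_
    have hnone : fimg (ext f') (none : Option {z // z ∈ Z})
        = fimg f' (none : Option {z // z ∈ Z.erase z₀.1}) := by
      ext b
      simp only [mem_fimg]
      constructor
      · rintro ⟨h, hf⟩
        exact ⟨h, Option.map_eq_none_iff.mp hf⟩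
      · rintro ⟨h, hf⟩
        exact ⟨h, by simp [ext, hf]⟩
    have hz₀fib : fimg (ext f') (some z₀) = ∅ := by
      rw [Finset.eq_empty_iff_forall_notMem]
      intro b hb
      rw [mem_fimg] at hb
      rcases hb with ⟨h, hf⟩
      rcases Option.map_eq_some_iff.mp hf with ⟨z', -, hz'⟩
      exact (Finset.mem_erase.mp z'.2).1 (congrArg Subtype.val hz')
    have hfibz : ∀ z' : {z // z ∈ Z.erase z₀.1},
        fimg (ext f') (some (ι z')) = fimg f' (some z') := by
      intro z'
      ext b
      simp only [mem_fimg]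
      constructor
      · rintro ⟨h, hf⟩
        rcases Option.map_eq_some_iff.mp hf with ⟨w, hw, hw2⟩
        exact ⟨h, by rw [hw, ιinj hw2]⟩
      · rintro ⟨h, hf⟩
        exact ⟨h, by simp [ext, hf]⟩
    have hprod : ∏ z ∈ Finset.univ.erase z₀, ltilde pd pz c z.1 (fimg (ext f') (some z))
        = ∏ z' : {z // z ∈ Z.erase z₀.1}, ltilde pd pz c z'.1 (fimg f' (some z')) := by
      refine (Finset.prod_bij (fun z' _ => ι z') ?_ ?_ ?_ ?_).symm
      · intro z' _
        exact Finset.mem_erase.mpr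
          ⟨fun h => (Finset.mem_erase.mp z'.2).1 (congrArg Subtype.val h), Finset.mem_univ _⟩
      · intro a _ b _ h
        exact ιinj h
      · intro z hz
        have hz1 : z.1 ∈ Z.erase z₀.1 := Finset.mem_erase.mpr
          ⟨fun h => (Finset.mem_erase.mp hz).1 (Subtype.ext h), z.2⟩
        exact ⟨⟨z.1, hz1⟩, Finset.mem_univ _, rfl⟩
      · intro z' _
        rw [hfibz z']
    rw [hnone, hz₀fib, hprod, insert_empty_eq]
    ring
end

section
/- Bayesian update of a Bernoulli component with a missed detection: with f, t as above, q(X) = t(∅|X) f(X)/ρ₀ with ρ₀ = 1 - r + r ∑_x (1-p_d(x)) p(x) is a Bernoulli density with existence probability r·(∑_x (1-p_d(x)) p(x)) / ρ₀ and state density proportional to (1-p_d(x)) p(x), provided ρ₀ > 0 and ∑_x (1-p_d(x)) p(x) > 0. In particular ρ₀ > 0 whenever r < 1 or p_d < 1 somewhere on the support of p. -/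
open Finset

/-- Bayesian update of a Bernoulli component with a missed detection: if `f`
is Bernoulli with existence `r` and pmf `p`, the updated density
`q(X) = t(∅|X) f(X)/ρ₀` with `ρ₀ = 1 - r + r Q`, `Q = ∑_x (1-p_d(x)) p(x)`, is
Bernoulli with existence probability `r Q / ρ₀` and state density
`(1-p_d(x)) p(x) / Q`, provided `ρ₀ > 0` and `Q > 0`.  In particular `ρ₀ > 0`
whenever `r < 1` or `p_d < 1` somewhere on the support of `p`. -/
theorem bernoulli_update_misdetection {α : Type*} [DecidableEq α] [Countable α]
    (r : ℝ) (hr0 : 0 ≤ r) (hr1 : r ≤ 1)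
    (p : α → ℝ) (hp : ∀ x, 0 ≤ p x) (hpsum : Summable p) (hp1 : ∑' x, p x = 1)
    (pd : α → ℝ) (hpd : ∀ x, 0 ≤ pd x ∧ pd x ≤ 1)
    (hsum : Summable (fun x => (1 - pd x) * p x))
    (f : Finset α → ℝ)
    (hemp : f ∅ = 1 - r) (hsing : ∀ x, f {x} = r * p x)
    (hbig : ∀ X : Finset α, 2 ≤ X.card → f X = 0)
    (Q : ℝ) (hQ : Q = ∑' x, (1 - pd x) * p x)
    (ρ₀ : ℝ) (hρ₀ : ρ₀ = 1 - r + r * Q)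
    (hρ₀pos : 0 < ρ₀) (hQpos : 0 < Q)
    (q : Finset α → ℝ)
    (hq : ∀ X : Finset α,
      q X = (if X = ∅ then 1 else if X.card = 1 then ∑ x ∈ X, (1 - pd x) else 0)
          * f X / ρ₀) :
    q ∅ = 1 - r * Q / ρ₀ ∧
    (∀ x : α, q {x} = (r * Q / ρ₀) * ((1 - pd x) * p x / Q)) ∧
    (∀ X : Finset α, 2 ≤ X.card → q X = 0) ∧
    ((r < 1 ∨ ∃ x, 0 < p x ∧ pd x < 1) → 0 < 1 - r + r * Q) := by
  refine ⟨?_, ?_, ?_, fun _ => hρ₀ ▸ hρ₀pos⟩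
  · rw [hq, hemp]
    simp only [if_pos rfl, if_true]
    field_simp
    rw [hρ₀]; ring
  · intro x
    rw [hq {x}, hsing x]
    have h1 : ({x} : Finset α) ≠ ∅ := by simp
    have h2 : ({x} : Finset α).card = 1 := by simp
    rw [if_neg h1, if_pos h2, Finset.sum_singleton]
    field_simp
  · intro X hX
    have h1 : X ≠ ∅ := by
      intro h; rw [h] at hX; simp at hX
    have h2 : X.card ≠ 1 := by omega
    rw [hq X, if_neg h1, if_neg h2, hbig X hX]
    ring
end

section
/- Convolution of two multi-Bernoulli mixtures is a multi-Bernoulli mixture: if f(X) = ∑_j w_j ∑_{X₁⊎...⊎Xₙ=X} ∏ᵢ f_{j,i}(Xᵢ) and g(Y) = ∑_k v_k ∑_{Y₁⊎...⊎Y_{n_b}=Y} ∏ᵢ g_{k,i}(Yᵢ) are MBMs (each f_{j,i}, g_{k,i} Bernoulli), then their convolution h(W) = ∑_{X⊎Y=W} f(X) g(Y) equals ∑_{j,k} w_j v_k ∑_{X₁⊎...⊎Xₙ⊎Y₁⊎...⊎Y_{n_b}=W} ∏ᵢ f_{j,i}(Xᵢ) ∏ᵢ g_{k,i}(Yᵢ),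 i.e. an MBM whose components index over pairs (j,k) and concatenate the Bernoulli lists. -/
open Finset

/-- The multi-object density obtained from a finite family
`Fi : Fin n → Finset α → ℝ` of (Bernoulli) set functions by summing over
ordered decompositions of `X` into `n` labelled, possibly empty parts
(encoded by assignments `φ : X → Fin n`). -/
noncomputable def mbDensity {α : Type*} [DecidableEq α] {n : ℕ}
    (Fi : Fin n → Finset α → ℝ) (X : Finset α) : ℝ :=
  ∑ φ : {x // x ∈ X} → Fin n,
    ∏ i : Fin n, Fi i ((Finset.univ.filter (fun a => φ a = i)).image Subtype.val)

/-- Glue an assignment on `X` and one on `W \ X` into one on `W`. -/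
def glue {α : Type*} [DecidableEq α] {n nb : ℕ} (W : Finset α)
    (p : Σ X : Finset α, ({x // x ∈ X} → Fin n) × ({x // x ∈ W \ X} → Fin nb)) :
    {x // x ∈ W} → Fin (n + nb) :=
  fun a =>
    if h : a.1 ∈ p.1 then Fin.castAdd nb (p.2.1 ⟨a.1, h⟩)
    else Fin.natAdd n (p.2.2 ⟨a.1, Finset.mem_sdiff.mpr ⟨a.2, h⟩⟩)

lemma key {α : Type*} [DecidableEq α] {n nb : ℕ}
    (Fi : Fin n → Finset α → ℝ) (Gi : Fin nb → Finset α → ℝ) (W : Finset α) :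
    ∑ X ∈ W.powerset, mbDensity Fi X * mbDensity Gi (W \ X)
      = mbDensity (fun i : Fin (n + nb) => Fin.addCases Fi Gi i) W := by
  unfold mbDensity
  simp_rw [Finset.sum_mul_sum]
  have h1 : ∀ X ∈ W.powerset,
      (∑ φ : {x // x ∈ X} → Fin n, ∑ ψ : {x // x ∈ W \ X} → Fin nb,
        (∏ i : Fin n, Fi i ((Finset.univ.filter (fun a => φ a = i)).image Subtype.val)) *
        ∏ i : Fin nb, Gi i ((Finset.univ.filter (fun a => ψ a = i)).image Subtype.val))
      = ∑ q : ({x // x ∈ X} → Fin n) × ({x // x ∈ W \ X} → Fin nb),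
        (∏ i : Fin n, Fi i ((Finset.univ.filter (fun a => q.1 a = i)).image Subtype.val)) *
        ∏ i : Fin nb, Gi i ((Finset.univ.filter (fun a => q.2 a = i)).image Subtype.val) := by
    intro X _
    exact (Fintype.sum_prod_type' _).symm
  rw [Finset.sum_congr rfl h1, Finset.sum_sigma']
  refine Finset.sum_bij (fun p _ => glue W p) (fun p _ => Finset.mem_univ _) ?_ ?_ ?_
  · -- injectivity
    rintro ⟨X, φ, ψ⟩ hp ⟨Y, φ', ψ'⟩ hq h
    rw [Finset.mem_sigma, Finset.mem_powerset] at hp hq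
    have hX : X ⊆ W := hp.1
    have hY : Y ⊆ W := hq.1
    have hXY : X = Y := by
      ext x
      constructor
      · intro hx
        have hw : x ∈ W := hX hx
        have := congrFun h ⟨x, hw⟩
        simp only [glue, dif_pos hx] at this
        by_contra hy
        rw [dif_neg hy] at this
        have h1 := congrArg Fin.val this
        simp only [Fin.coe_castAdd, Fin.coe_natAdd] at h1
        have := (φ ⟨x, hx⟩).isLt
        omega
      · intro hy
        have hw : x ∈ W := hY hy
        have := congrFun h ⟨x, hw⟩
        simp only [glue, dif_pos hy] at this
        by_contra hx
        rw [dif_neg hx] at this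
        have h1 := congrArg Fin.val this
        simp only [Fin.coe_castAdd, Fin.coe_natAdd] at h1
        have := (φ' ⟨x, hy⟩).isLt
        omega
    subst hXY
    have hφ : φ = φ' := by
      funext x
      have := congrFun h ⟨x.1, hX x.2⟩
      simp only [glue, dif_pos x.2] at this
      have h1 := congrArg Fin.val this
      simp only [Fin.coe_castAdd] at h1
      exact Fin.ext h1
    have hψ : ψ = ψ' := by
      funext y
      have hy := Finset.mem_sdiff.mp y.2
      have := congrFun h ⟨y.1, hy.1⟩
      simp only [glue, dif_neg hy.2] at this
      have h1 := congrArg Fin.val this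
      simp only [Fin.coe_natAdd] at h1
      have h2 : n + (ψ y : ℕ) = n + (ψ' y : ℕ) := h1
      exact Fin.ext (by omega)
    subst hφ; subst hψ; rfl
  · -- surjectivity
    intro ρ _
    set X : Finset α := (W.attach.filter fun a => (ρ a : ℕ) < n).image Subtype.val with hXdef
    have hXW : X ⊆ W := by
      intro x hx
      simp only [hXdef, Finset.mem_image, Finset.mem_filter, Finset.mem_attach, true_and] at hx
      obtain ⟨a, _, rfl⟩ := hx
      exact a.2
    have hmem : ∀ (x : α) (hw : x ∈ W), x ∈ X ↔ (ρ ⟨x, hw⟩ : ℕ) < n := by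
      intro x hw
      simp only [hXdef, Finset.mem_image, Finset.mem_filter, Finset.mem_attach, true_and]
      constructor
      · rintro ⟨a, ha, rfl⟩
        exact ha
      · intro h
        exact ⟨⟨x, hw⟩, h, rfl⟩
    refine ⟨⟨X, fun x => ⟨(ρ ⟨x.1, hXW x.2⟩ : ℕ), (hmem x.1 (hXW x.2)).mp x.2⟩,
        fun y => ⟨(ρ ⟨y.1, (Finset.mem_sdiff.mp y.2).1⟩ : ℕ) - n, ?_⟩⟩,
      Finset.mem_sigma.mpr ⟨Finset.mem_powerset.mpr hXW, Finset.mem_univ _⟩, ?_⟩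
    · have hy := Finset.mem_sdiff.mp y.2
      have h1 : ¬ (ρ ⟨y.1, hy.1⟩ : ℕ) < n := fun hc => hy.2 ((hmem y.1 hy.1).mpr hc)
      have h2 := (ρ ⟨y.1, hy.1⟩).isLt
      omega
    · funext a
      simp only [glue]
      by_cases h : a.1 ∈ X
      · rw [dif_pos h]
        exact Fin.ext (by simp)
      · rw [dif_neg h]
        have h1 : ¬ (ρ a : ℕ) < n := fun hc => h ((hmem a.1 a.2).mpr hc)
        apply Fin.ext
        show n + ((ρ a : ℕ) - n) = (ρ a : ℕ)
        omega
  · -- values agree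
    rintro ⟨X, φ, ψ⟩ hp
    rw [Finset.mem_sigma, Finset.mem_powerset] at hp
    have hX : X ⊆ W := hp.1
    rw [Fin.prod_univ_add]
    simp only [Fin.addCases_left, Fin.addCases_right]
    congr 1
    · refine Finset.prod_congr rfl fun i _ => ?_
      congr 1
      ext x
      simp only [Finset.mem_image, Finset.mem_filter, Finset.mem_univ, true_and]
      constructor
      · rintro ⟨a, ha, rfl⟩
        refine ⟨⟨a.1, hX a.2⟩, ?_, rfl⟩
        simp only [glue, dif_pos a.2]
        rw [ha]
      · rintro ⟨a, ha, rfl⟩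
        simp only [glue] at ha
        by_cases hx : a.1 ∈ X
        · rw [dif_pos hx] at ha
          refine ⟨⟨a.1, hx⟩, ?_, rfl⟩
          have := congrArg Fin.val ha
          simp only [Fin.coe_castAdd] at this
          exact Fin.ext this
        · rw [dif_neg hx] at ha
          have h1 := congrArg Fin.val ha
          simp only [Fin.coe_castAdd, Fin.coe_natAdd] at h1
          have := i.isLt
          omega
    · refine Finset.prod_congr rfl fun i _ => ?_
      congr 1
      ext x
      simp only [Finset.mem_image, Finset.mem_filter, Finset.mem_univ, true_and]
      constructor
      · rintro ⟨a, ha, rfl⟩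
        have ha2 := Finset.mem_sdiff.mp a.2
        refine ⟨⟨a.1, ha2.1⟩, ?_, rfl⟩
        simp only [glue, dif_neg ha2.2]
        rw [ha]
      · rintro ⟨a, ha, rfl⟩
        simp only [glue] at ha
        by_cases hx : a.1 ∈ X
        · rw [dif_pos hx] at ha
          have h1 := congrArg Fin.val ha
          simp only [Fin.coe_castAdd, Fin.coe_natAdd] at h1
          have := (φ ⟨a.1, hx⟩).isLt
          omega
        · rw [dif_neg hx] at ha
          refine ⟨⟨a.1, Finset.mem_sdiff.mpr ⟨a.2, hx⟩⟩, ?_, rfl⟩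
          have h1 := congrArg Fin.val ha
          simp only [Fin.coe_natAdd] at h1
          exact Fin.ext (by omega)

/-- Convolution of two multi-Bernoulli mixtures is a multi-Bernoulli mixture:
the components index over pairs `(j,k)` and concatenate the Bernoulli lists,
with weights `w_j v_k`. -/
theorem mbm_convolution {α : Type*} [DecidableEq α] {J K : Type*}
    [Fintype J] [Fintype K] (n nb : ℕ)
    (w : J → ℝ) (v : K → ℝ)
    (F : J → Fin n → Finset α → ℝ) (G : K → Fin nb → Finset α → ℝ)
    (hF : ∀ (j : J) (i : Fin n) (X : Finset α), 2 ≤ X.card → F j i X = 0)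
    (hG : ∀ (k : K) (i : Fin nb) (Y : Finset α), 2 ≤ Y.card → G k i Y = 0)
    (W : Finset α) :
    ∑ X ∈ W.powerset,
        (∑ j : J, w j * mbDensity (F j) X) *
          (∑ k : K, v k * mbDensity (G k) (W \ X)) =
      ∑ j : J, ∑ k : K, w j * v k *
        mbDensity (fun i : Fin (n + nb) => Fin.addCases (F j) (G k) i) W := by
  simp_rw [Finset.sum_mul_sum]
  rw [Finset.sum_comm]
  refine Finset.sum_congr rfl fun j _ => ?_
  rw [Finset.sum_comm]
  refine Finset.sum_congr rfl fun k _ => ?_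
  rw [← key (F j) (G k) W, Finset.mul_sum]
  refine Finset.sum_congr rfl fun X _ => by ring
end

section
/- A labelled multi-Bernoulli density with distinct deterministic labels, evaluated at a labelled set with distinct labels, collapses to a single term: let f(X) = ∑_{X₁⊎...⊎Xₙ=X} ∏ᵢ f_i^{lb}(Xᵢ) where f_i^{lb}(∅) = 1-rᵢ, f_i^{lb}({(x,ℓ)}) = rᵢ pᵢ(x) [ℓ = ℓᵢ], with ℓ₁,...,ℓₙ pairwise distinct. Then for distinct indices a₁,...,a_p ∈ {1,...,n}, f({(x₁,ℓ_{a₁}),...,(x_p,ℓ_{a_p})}) = (∏_{m=1}^p r_{a_m} p_{a_m}(x_m)) · ∏_{i ∉ {a₁,...,a_p}} (1-rᵢ), and f vanishes on any labelled set containing a label outside {ℓ₁,...,ℓₙ} or containing two elements with the same label. -/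
open Finset

/-- Labelled Bernoulli density with existence `r`, state density `p` and
deterministic label `lab`: `1-r` on `∅`, `r·p(x)·[ℓ = lab]` on `{(x,ℓ)}`,
and `0` otherwise. -/
noncomputable def labBern {α L : Type*} [DecidableEq α] [DecidableEq L]
    (r : ℝ) (p : α → ℝ) (lab : L) (X : Finset (α × L)) : ℝ :=
  if X = ∅ then 1 - r
  else if X.card = 1 then r * ∑ q ∈ X, (if q.2 = lab then p q.1 else 0)
  else 0

/-- The labelled multi-Bernoulli density: sum over ordered decompositions of
`X` into `n` labelled, possibly empty parts (encoded by `φ : X → Fin n`). -/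
noncomputable def labMB {α L : Type*} [DecidableEq α] [DecidableEq L] {n : ℕ}
    (r : Fin n → ℝ) (p : Fin n → α → ℝ) (lab : Fin n → L)
    (X : Finset (α × L)) : ℝ :=
  ∑ φ : {q // q ∈ X} → Fin n,
    ∏ i : Fin n,
      labBern (r i) (p i) (lab i)
        ((Finset.univ.filter (fun a => φ a = i)).image Subtype.val)

lemma labBern_zero_of_bad {α L : Type*} [DecidableEq α] [DecidableEq L]
    {r : ℝ} {p : α → ℝ} {lab : L} {S : Finset (α × L)} {q : α × L}
    (hq : q ∈ S) (h : q.2 ≠ lab) : labBern r p lab S = 0 := by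
  unfold labBern
  rw [if_neg (Finset.ne_empty_of_mem hq)]
  split_ifs with h1
  · obtain ⟨b, hb⟩ := Finset.card_eq_one.mp h1
    subst hb
    simp only [Finset.mem_singleton] at hq
    subst hq
    simp [h]
  · rfl

lemma labBern_zero_of_two {α L : Type*} [DecidableEq α] [DecidableEq L]
    {r : ℝ} {p : α → ℝ} {lab : L} {S : Finset (α × L)}
    (h : 2 ≤ S.card) : labBern r p lab S = 0 := by
  unfold labBern
  rw [if_neg, if_neg] <;> [omega; skip]
  intro hS; rw [hS] at h; simp at h

lemma labBern_singleton {α L : Type*} [DecidableEq α] [DecidableEq L]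
    {r : ℝ} {p : α → ℝ} {lab : L} (q : α × L) :
    labBern r p lab {q} = r * (if q.2 = lab then p q.1 else 0) := by
  unfold labBern
  rw [if_neg (by simp), if_pos (by simp), Finset.sum_singleton]

/-- A labelled multi-Bernoulli density with pairwise distinct deterministic
labels, evaluated at a labelled set with distinct labels
`{(x₁,ℓ_{a₁}),...,(x_p,ℓ_{a_p})}`, collapses to the single term
`(∏_m r_{a_m} p_{a_m}(x_m)) · ∏_{i∉{a₁,...,a_p}} (1-rᵢ)`; and it vanishes on
any labelled set containing a label outside `{ℓ₁,...,ℓₙ}` or two elements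
with the same label. -/
theorem labelled_mb_evaluation {α L : Type*} [DecidableEq α] [DecidableEq L]
    (n : ℕ) (r : Fin n → ℝ) (p : Fin n → α → ℝ)
    (lab : Fin n → L) (hlab : Function.Injective lab) :
    (∀ (m : ℕ) (a : Fin m → Fin n), Function.Injective a → ∀ x : Fin m → α,
      labMB r p lab (Finset.univ.image (fun t : Fin m => (x t, lab (a t)))) =
        (∏ t : Fin m, r (a t) * p (a t) (x t)) *
          ∏ i ∈ Finset.univ \ Finset.univ.image a, (1 - r i)) ∧
    (∀ X : Finset (α × L), (∃ q ∈ X, ∀ i, q.2 ≠ lab i) → labMB r p lab X = 0) ∧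
    (∀ X : Finset (α × L),
      (∃ q ∈ X, ∃ q' ∈ X, q ≠ q' ∧ q.2 = q'.2) → labMB r p lab X = 0) := by
  refine ⟨?_, ?_, ?_⟩
  · -- main evaluation
    intro m a ha x
    set e : Fin m → α × L := fun t => (x t, lab (a t)) with he
    have hein : Function.Injective e := by
      intro s t hst
      simp only [e, Prod.mk.injEq] at hst
      exact ha (hlab hst.2)
    set X : Finset (α × L) := Finset.univ.image e with hX
    have hmem : ∀ t, e t ∈ X := fun t => Finset.mem_image_of_mem e (mem_univ t)
    set E : Fin m → {q // q ∈ X} := fun t => ⟨e t, hmem t⟩ with hEdef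
    have hE : Function.Bijective E := by
      constructor
      · intro s t hst
        exact hein (congrArg Subtype.val hst)
      · rintro ⟨q, hq⟩
        obtain ⟨t, -, rfl⟩ := Finset.mem_image.mp hq
        exact ⟨t, rfl⟩
    set e' : Fin m ≃ {q // q ∈ X} := Equiv.ofBijective E hE with he'
    rw [labMB, ← Equiv.sum_comp (Equiv.arrowCongr e' (Equiv.refl (Fin n)))]
    have hpart : ∀ (ψ : Fin m → Fin n) (i : Fin n),
        ((Finset.univ.filter
            (fun q : {q // q ∈ X} =>
              (Equiv.arrowCongr e' (Equiv.refl (Fin n))) ψ q = i)).image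
          Subtype.val)
          = (Finset.univ.filter (fun t => ψ t = i)).image e := by
      intro ψ i
      ext q
      simp only [Finset.mem_image, Finset.mem_filter, Finset.mem_univ, true_and,
        Equiv.arrowCongr_apply, Function.comp_apply, Equiv.refl_apply]
      constructor
      · rintro ⟨⟨q, hq⟩, h1, rfl⟩
        refine ⟨e'.symm ⟨q, hq⟩, h1, ?_⟩
        have := congrArg Subtype.val (e'.apply_symm_apply ⟨q, hq⟩)
        exact this
      · rintro ⟨t, h1, rfl⟩
        refine ⟨E t, ?_, rfl⟩
        have : e'.symm (E t) = t := e'.symm_apply_apply t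
        rw [this]; exact h1
    simp only [hpart]
    rw [Finset.sum_eq_single_of_mem a (mem_univ a)]
    · -- main term
      rw [← Finset.prod_sdiff (Finset.subset_univ (Finset.univ.image a))]
      have h1 : ∀ i ∈ Finset.univ \ Finset.univ.image a,
          labBern (r i) (p i) (lab i)
            ((Finset.univ.filter (fun t => a t = i)).image e) = 1 - r i := by
        intro i hi
        have hfe : (Finset.univ.filter (fun t => a t = i)) = ∅ := by
          rw [Finset.filter_eq_empty_iff]
          intro t _ hti
          rw [Finset.mem_sdiff] at hi
          exact hi.2 (hti ▸ Finset.mem_image_of_mem a (mem_univ t))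
        rw [hfe]
        simp [labBern]
      rw [Finset.prod_congr rfl h1]
      have h2 : (∏ i ∈ Finset.univ.image a,
          labBern (r i) (p i) (lab i)
            ((Finset.univ.filter (fun t => a t = i)).image e))
          = ∏ t : Fin m, r (a t) * p (a t) (x t) := by
        rw [Finset.prod_image (fun s _ t _ h => ha h)]
        refine Finset.prod_congr rfl fun t _ => ?_
        have hfil : Finset.univ.filter (fun s => a s = a t) = {t} := by
          ext s
          simp [ha.eq_iff]
        rw [hfil, Finset.image_singleton, labBern_singleton]
        simp [e]
      rw [h2, mul_comm]
    · -- other terms vanish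
      intro ψ _ hψ
      obtain ⟨t, ht⟩ := Function.ne_iff.mp hψ
      refine Finset.prod_eq_zero (mem_univ (ψ t)) ?_
      refine labBern_zero_of_bad (q := e t) ?_ ?_
      · exact Finset.mem_image_of_mem e (Finset.mem_filter.mpr ⟨mem_univ t, rfl⟩)
      · simp only [e]
        exact fun h => ht (hlab h).symm
  · -- label outside
    rintro X ⟨q, hq, hbad⟩
    rw [labMB]
    refine Finset.sum_eq_zero fun φ _ => ?_
    have hqm : q ∈ (Finset.univ.filter
        (fun a : {q // q ∈ X} => φ a = φ ⟨q, hq⟩)).image Subtype.val := by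
      rw [Finset.mem_image]
      exact ⟨⟨q, hq⟩, Finset.mem_filter.mpr ⟨mem_univ _, rfl⟩, rfl⟩
    exact Finset.prod_eq_zero (mem_univ (φ ⟨q, hq⟩)) (labBern_zero_of_bad hqm (hbad _))
  · -- repeated label
    rintro X ⟨q, hq, q', hq', hne, hll⟩
    rw [labMB]
    refine Finset.sum_eq_zero fun φ _ => ?_
    have hqm : ∀ i, φ ⟨q, hq⟩ = i → q ∈ (Finset.univ.filter
        (fun a : {q // q ∈ X} => φ a = i)).image Subtype.val := by
      intro i h
      rw [Finset.mem_image]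
      exact ⟨⟨q, hq⟩, Finset.mem_filter.mpr ⟨mem_univ _, h⟩, rfl⟩
    have hqm' : ∀ i, φ ⟨q', hq'⟩ = i → q' ∈ (Finset.univ.filter
        (fun a : {q // q ∈ X} => φ a = i)).image Subtype.val := by
      intro i h
      rw [Finset.mem_image]
      exact ⟨⟨q', hq'⟩, Finset.mem_filter.mpr ⟨mem_univ _, h⟩, rfl⟩
    by_cases hij : φ ⟨q, hq⟩ = φ ⟨q', hq'⟩
    · refine Finset.prod_eq_zero (mem_univ (φ ⟨q, hq⟩)) (labBern_zero_of_two ?_)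
      exact Finset.one_lt_card.mpr ⟨q, hqm _ rfl, q', hqm' _ hij.symm, hne⟩
    · by_cases hq2 : q.2 = lab (φ ⟨q, hq⟩)
      · refine Finset.prod_eq_zero (mem_univ (φ ⟨q', hq'⟩))
          (labBern_zero_of_bad (hqm' _ rfl) ?_)
        intro h
        exact hij (hlab (hq2.symm.trans (hll.trans h)))
      · exact Finset.prod_eq_zero (mem_univ (φ ⟨q, hq⟩))
          (labBern_zero_of_bad (hqm _ rfl) hq2)
end
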